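/- For all α, β, x, y ∈ F and all k ∈ F^×, the conjugate χ(α,β)^{χ(x,y)κ(k)} := (χ(x,y)κ(k))^{-1}·χ(α,β)·(χ(x,y)κ(k)) equals χ(αk, (αx^r + xα^r + β)k^{1+r}). -/

import Mathlib

open Matrix

noncomputable section

/-- `r = 2^((m+1)/2)`. -/
def szr (m : ℕ) : ℕ := 2 ^ ((m + 1) / 2)

/-- The Suzuki group generator `χ(α,β)`, a lower unitriangular 4×4 matrix. -/
def szchi {F : Type*} [Field F] (m : ℕ) (α β : F) : Matrix (Fin 4) (Fin 4) F :=
  !![1, 0, 0, 0;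
     α, 1, 0, 0;
     α ^ (1 + szr m) + β, α ^ szr m, 1, 0;
     α ^ (2 + szr m) + α * β + β ^ szr m, β, α, 1]

/-- The diagonal torus element `κ(k) = diag(k^{r/2+1}, k^{r/2}, k^{-r/2}, k^{-r/2-1})`. -/
def szkappa {F : Type*} [Field F] (m : ℕ) (k : F) : Matrix (Fin 4) (Fin 4) F :=
  Matrix.diagonal ![k ^ (szr m / 2 + 1), k ^ (szr m / 2),
    k ^ (-(szr m / 2 : ℤ)), k ^ (-(szr m / 2 : ℤ) - 1)]

/-- `χ(α,β)^{χ(x,y)κ(k)} = χ(αk, (αx^r + xα^r + β)k^{1+r})`. -/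
theorem statement_3 (m : ℕ) (hm : Odd m) (hm3 : 3 ≤ m)
    (F : Type*) [Field F] [Fintype F] (hF : Fintype.card F = 2 ^ m)
    (α β x y : F) (k : F) (hk : k ≠ 0) :
    (szchi m x y * szkappa m k)⁻¹ * szchi m α β * (szchi m x y * szkappa m k)
      = szchi m (α * k) ((α * x ^ szr m + x * α ^ szr m + β) * k ^ (1 + szr m)) := by
  obtain ⟨n, hn⟩ := hm
  -- characteristic 2
  have h2 : (2 : F) = 0 := by
    have hc := FiniteField.cast_card_eq_zero F
    rw [hF] at hc
    push_cast at hc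
    exact pow_eq_zero_iff (by omega) |>.mp hc
  have hp2 : CharP F 2 := by
    have hchar := ringChar.charP F
    have hprime : Nat.Prime (ringChar F) := CharP.char_is_prime F (ringChar F)
    have hdvd : ringChar F ∣ 2 := (CharP.cast_eq_zero_iff F (ringChar F) 2).mp h2
    have : ringChar F = 2 := (Nat.prime_dvd_prime_iff_eq hprime Nat.prime_two).mp hdvd
    rwa [this] at hchar
  haveI := hp2
  haveI : Fact (Nat.Prime 2) := ⟨Nat.prime_two⟩
  -- exponents
  have hq : ∀ a : F, a ^ (2 ^ m) = a := by
    intro a; rw [← hF]; exact FiniteField.pow_card a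
  have hsz : szr m = 2 ^ (n + 1) := by
    unfold szr; congr 1; omega
  have hhalf : szr m / 2 = 2 ^ n := by
    rw [hsz, pow_succ, Nat.mul_div_cancel _ (by norm_num)]
  have hfr : ∀ a b : F, (a + b) ^ szr m = a ^ szr m + b ^ szr m := by
    intro a b; rw [hsz]; exact add_pow_char_pow a b 2 (n+1)
  have hsq : ∀ a : F, (a ^ szr m) ^ szr m = a ^ 2 := by
    intro a
    rw [← pow_mul, hsz, ← pow_add, show (n+1) + (n+1) = m + 1 by omega, pow_succ, pow_mul, hq]
  set r := szr m with hr
  set w : F := α * x ^ r + x * α ^ r + β with hw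
  -- kappa without zpow
  have hκ : ∀ c : F, szkappa m c =
      Matrix.diagonal ![c ^ (r/2 + 1), c ^ (r/2), (c ^ (r/2))⁻¹, (c ^ (r/2 + 1))⁻¹] := by
    intro c
    have hc2 : ((szr m : ℤ)) / 2 = ((szr m / 2 : ℕ) : ℤ) := (Int.natCast_div _ _).symm
    have e1 : c ^ (-(szr m / 2 : ℤ)) = (c ^ (szr m / 2))⁻¹ := by
      rw [hc2, _root_.zpow_neg, zpow_natCast]
    have e2 : c ^ (-(szr m / 2 : ℤ) - 1) = (c ^ (szr m / 2 + 1))⁻¹ := by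
      rw [hc2, show (-((szr m/2 : ℕ):ℤ) - 1) = -(((szr m/2+1 : ℕ)):ℤ) by push_cast; ring,
        _root_.zpow_neg, zpow_natCast]
    unfold szkappa
    rw [e1, e2]
  clear_value w
  have hwr : w ^ r = α ^ r * x ^ 2 + x ^ r * α ^ 2 + β ^ r := by
    rw [hw]; rw [hfr, hfr, mul_pow, mul_pow, hsq, hsq]
  have hB : szchi m α β * szchi m x y = szchi m x y * szchi m α w := by
    ext i j
    fin_cases i <;> fin_cases j <;>
      simp [szchi, Matrix.mul_apply, Fin.sum_univ_four, ← hr]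
    · ring1
    · linear_combination (-1 : F) * hw + (-(α*x^r)) * h2
    · ring1
    · linear_combination (-(x+α))*hw - hwr + (-(x^2*α^r + α*x*α^r + α^2*x^r))*h2
    · linear_combination (-1 : F)*hw + (-(x*α^r))*h2
    · ring1
  have hkr : k ^ (r/2) * k ^ (r/2) = k ^ r := by
    rw [← pow_add, hhalf, hsz, pow_succ]; ring
  have hA : szchi m α w * szkappa m k = szkappa m k * szchi m (α*k) (w * k^(1+r)) := by
    rw [hκ k]
    ext i j
    fin_cases i <;> fin_cases j <;>
      ((try simp [szchi, Matrix.mul_apply, Fin.sum_univ_four, Matrix.diagonal, ← hr]);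
       (try field_simp))
    · ring1
    · linear_combination ((α^(1+r) + w) * k) * hkr
    · linear_combination α^r * hkr
    · linear_combination ((α^(2+r) + α*w + w^r) * k^2) * hkr - (w^r * k^r) * (hsq k)
    · linear_combination (w*k) * hkr
    · ring1
  have hfr2 : (x * x ^ r + y) ^ r = x ^ r * x ^ 2 + y ^ r := by
    rw [hfr, mul_pow, hsq]
  have hX : szchi m x y * szchi m x (y + x^(1+r)) = 1 := by
    ext i j
    fin_cases i <;> fin_cases j <;>
      simp [szchi, Matrix.mul_apply, Fin.sum_univ_four, Matrix.one_apply, ← hr]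
    · linear_combination x * h2
    · linear_combination (2*x*x^r + y) * h2
    · linear_combination x^r * h2
    · linear_combination hfr2 + (3*x^2*x^r + 2*x*y + y^r) * h2
    · linear_combination (y + x*x^r) * h2
    · linear_combination x * h2
  have hK : szkappa m k * szkappa m k⁻¹ = 1 := by
    rw [hκ k, hκ k⁻¹]
    ext i j
    fin_cases i <;> fin_cases j <;>
      simp [Matrix.diagonal, Matrix.one_apply, Matrix.mul_apply, Fin.sum_univ_four, inv_pow] <;>
      field_simp
  have hXinv : (szchi m x y)⁻¹ = szchi m x (y + x^(1+r)) := inv_eq_right_inv hX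
  have hKinv : (szkappa m k)⁻¹ = szkappa m k⁻¹ := inv_eq_right_inv hK
  rw [Matrix.mul_inv_rev, hXinv, hKinv]
  simp only [mul_assoc]
  rw [← mul_assoc (szchi m α β) (szchi m x y), hB, mul_assoc,  hA,
    ← mul_assoc (szchi m x (y + x^(1+r))), mul_eq_one_comm.mp hX, one_mul,
    ← mul_assoc (szkappa m k⁻¹), mul_eq_one_comm.mp hK, one_mul]
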